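/- Let k be a positive integer, K ≥ 0, and let u : Δ → ℝ^k have all coordinates nonnegative and satisfy, for all p, q ∈ Δ: ‖u(p) − u(q)‖ ≤ K·‖p − q‖ and |⟨u(p), p⟩ − ⟨u(q), q⟩| ≤ K·‖p − q‖. Let p^e ∈ Δ be a symmetric Nash equilibrium, i.e., ⟨u(p^e), q⟩ ≤ ⟨u(p^e), p^e⟩ for all q ∈ Δ. Then for all p, q ∈ Δ: ⟨u(p), q⟩ ≤ ⟨u(p), p⟩ + 2K·‖p − p^e‖. In particular, every p ∈ Δ is a (2K·‖p − p^e‖)-approximate Nash equilibrium. (The chain of inequalities derived in the paper's proof of Proposition 1.) -/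

import Mathlib

open scoped RealInnerProductSpace

noncomputable section

/-- The standard simplex `Δ` in `ℝ^k`. -/
def stdSimplexE (k : ℕ) : Set (EuclideanSpace ℝ (Fin k)) :=
  {x | (∀ i, 0 ≤ x i) ∧ ∑ i, x i = 1}

/-- let `u : Δ → ℝ^k` have nonnegative coordinates, with
`‖u(p) − u(q)‖ ≤ K‖p − q‖` and `|⟨u(p), p⟩ − ⟨u(q), q⟩| ≤ K‖p − q‖` on `Δ`, and let
`p^e ∈ Δ` be a symmetric Nash equilibrium. Then for all `p, q ∈ Δ`,
`⟨u(p), q⟩ ≤ ⟨u(p), p⟩ + 2K‖p − p^e‖`; i.e. every `p ∈ Δ` is a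
`(2K‖p − p^e‖)`-approximate Nash equilibrium. -/
theorem stmt11 (k : ℕ) (hk : 0 < k) (K : ℝ) (hK : 0 ≤ K)
    (u : EuclideanSpace ℝ (Fin k) → EuclideanSpace ℝ (Fin k))
    (hnn : ∀ p ∈ stdSimplexE k, ∀ i, 0 ≤ u p i)
    (hLip : ∀ p ∈ stdSimplexE k, ∀ q ∈ stdSimplexE k, ‖u p - u q‖ ≤ K * ‖p - q‖)
    (hLip' : ∀ p ∈ stdSimplexE k, ∀ q ∈ stdSimplexE k,
      |⟪u p, p⟫ - ⟪u q, q⟫| ≤ K * ‖p - q‖)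
    (pe : EuclideanSpace ℝ (Fin k)) (hpe : pe ∈ stdSimplexE k)
    (heq : ∀ q ∈ stdSimplexE k, ⟪u pe, q⟫ ≤ ⟪u pe, pe⟫) :
    ∀ p ∈ stdSimplexE k, ∀ q ∈ stdSimplexE k,
      ⟪u p, q⟫ ≤ ⟪u p, p⟫ + 2 * K * ‖p - pe‖ := by
  intro p hp q hq
  -- ‖q‖ ≤ 1
  have hq1 : ‖q‖ ≤ 1 := by
    have hsq : ‖q‖ ^ 2 ≤ 1 := by
      have : ‖q‖ ^ 2 = ∑ i, q i * q i := by
        rw [← real_inner_self_eq_norm_sq]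
        rw [PiLp.inner_apply]; simp only [RCLike.inner_apply, conj_trivial]
      rw [this]
      calc ∑ i, q i * q i ≤ ∑ i, q i := by
            apply Finset.sum_le_sum
            intro i _
            have h1 : q i ≤ 1 := by
              have := hq.2
              have : q i ≤ ∑ j, q j := Finset.single_le_sum (fun j _ => hq.1 j) (Finset.mem_univ i)
              linarith [hq.2]
            nlinarith [hq.1 i]
        _ = 1 := hq.2
    nlinarith [norm_nonneg q]
  have h1 : ⟪u p - u pe, q⟫ ≤ K * ‖p - pe‖ := by
    calc ⟪u p - u pe, q⟫ ≤ ‖u p - u pe‖ * ‖q‖ := real_inner_le_norm _ _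
      _ ≤ (K * ‖p - pe‖) * 1 := by
          apply mul_le_mul (hLip p hp pe hpe) hq1 (norm_nonneg q)
          positivity
      _ = K * ‖p - pe‖ := by ring
  have h2 : ⟪u pe, pe⟫ ≤ ⟪u p, p⟫ + K * ‖p - pe‖ := by
    have := hLip' p hp pe hpe
    rw [abs_le] at this
    linarith [this.1]
  have h3 : ⟪u pe, q⟫ ≤ ⟪u pe, pe⟫ := heq q hq
  have hsplit : ⟪u p, q⟫ = ⟪u pe, q⟫ + ⟪u p - u pe, q⟫ := by
    rw [inner_sub_left]; ring
  rw [hsplit]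
  linarith
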